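/- arXiv:1503.06904 — 2 statements merged into one kernel-verified Lean document; each statement's English description precedes it below -/
import Mathlib

section
/- Let f, g : D → ℝ≥0 be measurable functions on a finite measure space D with total measure V. Then ∫_D f·g ≥ ∫₀^∞ ∫₀^∞ max{ |{f > s}| + |{g > t}| − V, 0 } ds dt. -/
open MeasureTheory

theorem product_lower_bound_by_distribution
    {α : Type*} [MeasurableSpace α] (μ : Measure α) [IsFiniteMeasure μ]
    (f g : α → ℝ) (hf : Measurable f) (hg : Measurable g)
    (hf0 : ∀ x, 0 ≤ f x) (hg0 : ∀ x, 0 ≤ g x) :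
    (∫⁻ s in Set.Ioi (0:ℝ), ∫⁻ t in Set.Ioi (0:ℝ),
        ((μ {x | s < f x} + μ {x | t < g x}) - μ Set.univ))
      ≤ ∫⁻ x, ENNReal.ofReal (f x * g x) ∂μ := by
  set w : α → ENNReal := fun x => ENNReal.ofReal (g x) with hw
  have hwm : Measurable w := ENNReal.measurable_ofReal.comp hg
  have hAs : ∀ s : ℝ, MeasurableSet {x | s < f x} :=
    fun s => measurableSet_lt measurable_const hf
  have hBt : ∀ t : ℝ, MeasurableSet {x | t < g x} :=
    fun t => measurableSet_lt measurable_const hg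
  have key : ∫⁻ x, ENNReal.ofReal (f x * g x) ∂μ
      = ∫⁻ s in Set.Ioi (0:ℝ), ∫⁻ t in Set.Ioi (0:ℝ),
          μ ({x | t < g x} ∩ {x | s < f x}) := by
    have h1 : ∫⁻ x, ENNReal.ofReal (f x * g x) ∂μ
        = ∫⁻ x, ENNReal.ofReal (f x) ∂(μ.withDensity w) := by
      rw [lintegral_withDensity_eq_lintegral_mul μ hwm
        hf.ennreal_ofReal]
      refine lintegral_congr fun x => ?_
      simp [hw, Pi.mul_apply, ← ENNReal.ofReal_mul (hg0 x), mul_comm]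
    rw [h1, lintegral_eq_lintegral_meas_lt (μ.withDensity w)
      (Filter.Eventually.of_forall hf0) hf.aemeasurable]
    refine lintegral_congr fun s => ?_
    rw [withDensity_apply w (hAs s),
      lintegral_eq_lintegral_meas_lt (μ.restrict {x | s < f x})
        (Filter.Eventually.of_forall hg0) hg.aemeasurable]
    refine lintegral_congr fun t => ?_
    rw [Measure.restrict_apply (hBt t)]
  rw [key]
  refine lintegral_mono fun s => lintegral_mono fun t => ?_
  rw [tsub_le_iff_right]
  calc μ {x | s < f x} + μ {x | t < g x}
      = μ ({x | s < f x} ∪ {x | t < g x}) + μ ({x | s < f x} ∩ {x | t < g x}) :=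
        (measure_union_add_inter _ (hBt t)).symm
    _ ≤ μ Set.univ + μ ({x | t < g x} ∩ {x | s < f x}) := by
        rw [Set.inter_comm]
        exact add_le_add (measure_mono (Set.subset_univ _)) le_rfl
    _ = μ ({x | t < g x} ∩ {x | s < f x}) + μ Set.univ := add_comm _ _
end

section
/- Let f, g : D → ℝ≥0 be measurable on a finite measure space. Then ∫_D f·g ≤ ∫₀^∞ ∫₀^∞ min{ |{f > s}|, |{g > t}| } ds dt. -/
open MeasureTheory

lemma lintegral_indicator_lt {c : ℝ} (_hc : 0 ≤ c) :
    ∫⁻ s in Set.Ioi (0:ℝ), (if s < c then (1:ENNReal) else 0) = ENNReal.ofReal c := by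
  have : (fun s : ℝ => if s < c then (1:ENNReal) else 0)
      = Set.indicator (Set.Iio c) (fun _ => (1:ENNReal)) := by
    ext s; simp [Set.indicator, Set.mem_Iio]
  rw [this]
  simp only [lintegral_indicator measurableSet_Iio, setLIntegral_one,
    Measure.restrict_apply measurableSet_Iio, Set.Iio_inter_Ioi, Real.volume_Ioo, sub_zero]

theorem product_upper_bound_by_distribution
    {α : Type*} [MeasurableSpace α] (μ : Measure α) [IsFiniteMeasure μ]
    (f g : α → ℝ) (hf : Measurable f) (hg : Measurable g)
    (hf0 : ∀ x, 0 ≤ f x) (hg0 : ∀ x, 0 ≤ g x) :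
    (∫⁻ x, ENNReal.ofReal (f x * g x) ∂μ)
      ≤ ∫⁻ s in Set.Ioi (0:ℝ), ∫⁻ t in Set.Ioi (0:ℝ),
          min (μ {x | s < f x}) (μ {x | t < g x}) := by
  have mite : ∀ c : ℝ, Measurable (fun r : ℝ => if r < c then (1:ENNReal) else 0) :=
    fun c => Measurable.ite (measurableSet_lt measurable_id measurable_const)
      measurable_const measurable_const
  have mf : MeasurableSet {p : α × ℝ | p.2 < f p.1} :=
    measurableSet_lt measurable_snd (hf.comp measurable_fst)
  have mg : MeasurableSet {p : α × ℝ | p.2 < g p.1} :=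
    measurableSet_lt measurable_snd (hg.comp measurable_fst)
  have step1 : (∫⁻ x, ENNReal.ofReal (f x * g x) ∂μ)
      = ∫⁻ s in Set.Ioi (0:ℝ), ∫⁻ x, (if s < f x then (1:ENNReal) else 0)
          * ENNReal.ofReal (g x) ∂μ := by
    rw [← lintegral_lintegral_swap]
    · refine lintegral_congr fun x => ?_
      rw [lintegral_mul_const _ (mite (f x)),
        lintegral_indicator_lt (hf0 x), ENNReal.ofReal_mul (hf0 x)]
    · exact ((measurable_one.ite mf measurable_zero).mul
        ((ENNReal.measurable_ofReal.comp hg).comp measurable_fst)).aemeasurable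
  rw [step1]
  refine lintegral_mono_ae (Filter.Eventually.of_forall fun s => ?_)
  have step2 : (∫⁻ x, (if s < f x then (1:ENNReal) else 0) * ENNReal.ofReal (g x) ∂μ)
      = ∫⁻ t in Set.Ioi (0:ℝ), ∫⁻ x, (if s < f x then (1:ENNReal) else 0)
          * (if t < g x then (1:ENNReal) else 0) ∂μ := by
    rw [← lintegral_lintegral_swap]
    · refine lintegral_congr fun x => ?_
      rw [lintegral_const_mul _ (mite (g x)), lintegral_indicator_lt (hg0 x)]
    · have m1 : MeasurableSet {p : α × ℝ | s < f p.1} :=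
        (hf.comp measurable_fst) measurableSet_Ioi
      exact ((measurable_one.ite m1 measurable_zero).mul
        (measurable_one.ite mg measurable_zero)).aemeasurable
  rw [step2]
  refine lintegral_mono_ae (Filter.Eventually.of_forall fun t => ?_)
  have hint : (∫⁻ x, (if s < f x then (1:ENNReal) else 0)
      * (if t < g x then (1:ENNReal) else 0) ∂μ)
      = μ ({x | s < f x} ∩ {x | t < g x}) := by
    have : (fun x => (if s < f x then (1:ENNReal) else 0)
        * (if t < g x then (1:ENNReal) else 0))
        = Set.indicator ({x | s < f x} ∩ {x | t < g x}) (fun _ => 1) := by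
      ext x
      by_cases h1 : s < f x <;> by_cases h2 : t < g x <;>
        simp [Set.indicator, h1, h2]
    rw [this]
    exact lintegral_indicator_one ((hf measurableSet_Ioi).inter (hg measurableSet_Ioi))
  rw [hint]
  exact le_min (measure_mono Set.inter_subset_left)
    (measure_mono Set.inter_subset_right)
end
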